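/- Let (X,𝒳,μ) be a probability space, f ∈ L^∞(μ) a non-negative function, and 𝒳₁, 𝒳₂ sub-σ-algebras of 𝒳. Then ∫ f · E(f|𝒳₁) · E(f|𝒳₂) dμ ≥ (∫ f dμ)³. -/

import Mathlib

open MeasureTheory

private lemma int_of_bdd {X : Type*} {m : MeasurableSpace X} {μ : Measure X} [IsFiniteMeasure μ]
    {u : X → ℝ} (hu : AEStronglyMeasurable u μ) {c : ℝ} (hbd : ∀ᵐ x ∂μ, ‖u x‖ ≤ c) :
    Integrable u μ := (integrable_const c).mono' hu hbd

private lemma integral_cs {X : Type*} {m : MeasurableSpace X} {μ : Measure X}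
    {u v : X → ℝ} (hu2 : Integrable (fun x => u x * u x) μ)
    (hv2 : Integrable (fun x => v x * v x) μ) (huv : Integrable (fun x => u x * v x) μ) :
    (∫ x, u x * v x ∂μ)^2 ≤ (∫ x, u x * u x ∂μ) * (∫ x, v x * v x ∂μ) := by
  set A := ∫ x, u x * u x ∂μ with hA
  set Bq := ∫ x, u x * v x ∂μ with hB
  set Cq := ∫ x, v x * v x ∂μ with hC
  have key : ∀ t : ℝ, 0 ≤ Cq * (t*t) + (2*Bq) * t + A := by
    intro t
    have h1 : Integrable (fun x => (2*t) * (u x * v x)) μ := huv.const_mul _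
    have h2 : Integrable (fun x => (t*t) * (v x * v x)) μ := hv2.const_mul _
    have hpos : 0 ≤ ∫ x, (u x + t * v x)^2 ∂μ := integral_nonneg fun x => sq_nonneg _
    have heq : ∫ x, (u x + t * v x)^2 ∂μ
        = ∫ x, (u x * u x + ((2*t) * (u x * v x) + (t*t) * (v x * v x))) ∂μ :=
      integral_congr_ae (Filter.Eventually.of_forall fun x => by ring)
    have h12 : Integrable (fun x => 2*t * (u x * v x) + t*t * (v x * v x)) μ := h1.add h2
    rw [heq, integral_add hu2 h12, integral_add h1 h2,
      integral_const_mul, integral_const_mul] at hpos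
    linarith
  have hd := discrim_le_zero key
  rw [discrim] at hd
  nlinarith [hd]

private lemma norm_bd {x c : ℝ} (h0 : 0 ≤ x) (hc : x ≤ c) : ‖x‖ ≤ c := by
  rw [Real.norm_eq_abs, abs_of_nonneg h0]; exact hc

private lemma int_mul_of_bdd {X : Type*} {m : MeasurableSpace X} {μ : Measure X}
    [IsFiniteMeasure μ] {u v : X → ℝ} {a b : ℝ}
    (hu : AEStronglyMeasurable u μ) (hv : AEStronglyMeasurable v μ)
    (hub : ∀ᵐ x ∂μ, ‖u x‖ ≤ a) (hvb : ∀ᵐ x ∂μ, ‖v x‖ ≤ b) :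
    Integrable (fun x => u x * v x) μ := by
  refine int_of_bdd (hu.mul hv) (c := a * b) ?_
  filter_upwards [hub, hvb] with x hxa hxb
  calc ‖u x * v x‖ = ‖u x‖ * ‖v x‖ := norm_mul _ _
    _ ≤ a * b := mul_le_mul hxa hxb (norm_nonneg _) ((norm_nonneg _).trans hxa)

/-- Chu's triple-product conditional expectation inequality:
for bounded non-negative `f` and sub-σ-algebras `m₁, m₂`,
`∫ f · E(f|m₁) · E(f|m₂) dμ ≥ (∫ f dμ)³`. -/
theorem triple_product_condexp_inequality
    {X : Type*} {m m₁ m₂ : MeasurableSpace X} (hm₁ : m₁ ≤ m) (hm₂ : m₂ ≤ m)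
    (μ : @Measure X m) [IsProbabilityMeasure μ]
    (f : X → ℝ) (hfmeas : Measurable[m] f) (hfpos : ∀ x, 0 ≤ f x)
    (C : ℝ) (hfbdd : ∀ x, f x ≤ C) :
    (∫ x, f x ∂μ) ^ 3 ≤ ∫ x, f x * (μ[f|m₁]) x * (μ[f|m₂]) x ∂μ := by
  letI : MeasurableSpace X := m
  have hXne : Nonempty X := by
    by_contra hX
    rw [not_nonempty_iff] at hX
    have h1 : μ Set.univ = 1 := measure_univ
    rw [Set.univ_eq_empty_iff.mpr hX, measure_empty] at h1
    exact zero_ne_one h1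
  have hC : 0 ≤ C := le_trans (hfpos (Classical.arbitrary X)) (hfbdd _)
  set D := Real.sqrt C with hDdef
  have hD : 0 ≤ D := Real.sqrt_nonneg _
  -- basic facts about f
  have hfaesm : AEStronglyMeasurable f μ := hfmeas.aestronglyMeasurable
  have hfn : ∀ᵐ x ∂μ, ‖f x‖ ≤ C :=
    Filter.Eventually.of_forall fun x => norm_bd (hfpos x) (hfbdd x)
  have hfint : Integrable f μ := int_of_bdd hfaesm hfn
  set g₁ := μ[f|m₁] with hg₁def
  set g₂ := μ[f|m₂] with hg₂def
  -- facts about g₁ g₂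
  have hg₁sm : StronglyMeasurable[m₁] g₁ := stronglyMeasurable_condExp
  have hg₂sm : StronglyMeasurable[m₂] g₂ := stronglyMeasurable_condExp
  have hg₁aesm : AEStronglyMeasurable g₁ μ := (hg₁sm.mono hm₁).aestronglyMeasurable
  have hg₂aesm : AEStronglyMeasurable g₂ μ := (hg₂sm.mono hm₂).aestronglyMeasurable
  have hg₁0 : 0 ≤ᵐ[μ] g₁ := condExp_nonneg (Filter.Eventually.of_forall hfpos)
  have hg₂0 : 0 ≤ᵐ[μ] g₂ := condExp_nonneg (Filter.Eventually.of_forall hfpos)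
  have hg₁C : ∀ᵐ x ∂μ, g₁ x ≤ C := by
    have h := condExp_mono (m := m₁) hfint (integrable_const C)
      (Filter.Eventually.of_forall hfbdd)
    rw [condExp_const hm₁] at h
    exact h
  have hg₂C : ∀ᵐ x ∂μ, g₂ x ≤ C := by
    have h := condExp_mono (m := m₂) hfint (integrable_const C)
      (Filter.Eventually.of_forall hfbdd)
    rw [condExp_const hm₂] at h
    exact h
  have hg₁n : ∀ᵐ x ∂μ, ‖g₁ x‖ ≤ C := by
    filter_upwards [hg₁0, hg₁C] with x h0 h1 using norm_bd h0 h1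
  have hg₂n : ∀ᵐ x ∂μ, ‖g₂ x‖ ≤ C := by
    filter_upwards [hg₂0, hg₂C] with x h0 h1 using norm_bd h0 h1
  -- the square root h of g₁
  set h : X → ℝ := fun x => Real.sqrt (g₁ x) with hhdef
  have hh0 : ∀ x, 0 ≤ h x := fun x => Real.sqrt_nonneg _
  have hhsm : StronglyMeasurable[m₁] h := Real.continuous_sqrt.comp_stronglyMeasurable hg₁sm
  have hhaesm : AEStronglyMeasurable h μ := (hhsm.mono hm₁).aestronglyMeasurable
  have hhD : ∀ᵐ x ∂μ, h x ≤ D := by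
    filter_upwards [hg₁C] with x hx using Real.sqrt_le_sqrt hx
  have hhn : ∀ᵐ x ∂μ, ‖h x‖ ≤ D := by
    filter_upwards [hhD] with x hx using norm_bd (hh0 x) hx
  have hh2 : ∀ᵐ x ∂μ, h x * h x = g₁ x := by
    filter_upwards [hg₁0] with x hx using Real.mul_self_sqrt hx
  -- integrability of products
  have hint_fg₁ : Integrable (fun x => f x * g₁ x) μ := int_mul_of_bdd hfaesm hg₁aesm hfn hg₁n
  have hint_fh : Integrable (fun x => f x * h x) μ := int_mul_of_bdd hfaesm hhaesm hfn hhn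
  have hfhn : ∀ᵐ x ∂μ, ‖f x * h x‖ ≤ C * D := by
    filter_upwards [hhn] with x hx
    calc ‖f x * h x‖ = ‖f x‖ * ‖h x‖ := norm_mul _ _
      _ ≤ C * D := mul_le_mul (norm_bd (hfpos x) (hfbdd x)) hx (norm_nonneg _) hC
  have hfg₁n : ∀ᵐ x ∂μ, ‖f x * g₁ x‖ ≤ C * C := by
    filter_upwards [hg₁n] with x hx
    calc ‖f x * g₁ x‖ = ‖f x‖ * ‖g₁ x‖ := norm_mul _ _
      _ ≤ C * C := mul_le_mul (norm_bd (hfpos x) (hfbdd x)) hx (norm_nonneg _) hC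
  have hint_fhh : Integrable (fun x => f x * h x * h x) μ :=
    int_mul_of_bdd (hfaesm.mul hhaesm) hhaesm hfhn hhn
  -- the conditional expectations A and B
  set A := μ[fun x => f x * g₁ x|m₂] with hAdef
  set B := μ[fun x => f x * h x|m₂] with hBdef
  have hAsm : StronglyMeasurable[m₂] A := stronglyMeasurable_condExp
  have hBsm : StronglyMeasurable[m₂] B := stronglyMeasurable_condExp
  have hAaesm : AEStronglyMeasurable A μ := (hAsm.mono hm₂).aestronglyMeasurable
  have hBaesm : AEStronglyMeasurable B μ := (hBsm.mono hm₂).aestronglyMeasurable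
  have hA0 : 0 ≤ᵐ[μ] A := by
    refine condExp_nonneg ?_
    filter_upwards [hg₁0] with x hx using mul_nonneg (hfpos x) hx
  have hB0 : 0 ≤ᵐ[μ] B := by
    refine condExp_nonneg ?_
    exact Filter.Eventually.of_forall fun x => mul_nonneg (hfpos x) (hh0 x)
  have hAC : ∀ᵐ x ∂μ, A x ≤ C * C := by
    have h := condExp_mono (m := m₂) hint_fg₁ (integrable_const (C * C)) ?_
    · rw [condExp_const hm₂] at h
      exact h
    · filter_upwards [hfg₁n] with x hx using le_trans (le_abs_self _) hx
  have hBC : ∀ᵐ x ∂μ, B x ≤ C * D := by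
    have h := condExp_mono (m := m₂) hint_fh (integrable_const (C * D)) ?_
    · rw [condExp_const hm₂] at h
      exact h
    · filter_upwards [hfhn] with x hx using le_trans (le_abs_self _) hx
  have hAn : ∀ᵐ x ∂μ, ‖A x‖ ≤ C * C := by
    filter_upwards [hA0, hAC] with x h0 h1 using norm_bd h0 h1
  have hBn : ∀ᵐ x ∂μ, ‖B x‖ ≤ C * D := by
    filter_upwards [hB0, hBC] with x h0 h1 using norm_bd h0 h1
  -- Step (i): rewrite the target integral
  have hint_g₂fg₁ : Integrable (fun x => g₂ x * (f x * g₁ x)) μ :=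
    int_mul_of_bdd hg₂aesm (hfaesm.mul hg₁aesm) hg₂n hfg₁n
  have hstep1 : ∫ x, f x * g₁ x * g₂ x ∂μ = ∫ x, g₂ x * A x ∂μ := by
    have hpull : μ[fun x => g₂ x * (f x * g₁ x)|m₂] =ᵐ[μ] fun x => g₂ x * A x :=
      condExp_mul_of_stronglyMeasurable_left hg₂sm hint_g₂fg₁ hint_fg₁
    calc ∫ x, f x * g₁ x * g₂ x ∂μ = ∫ x, g₂ x * (f x * g₁ x) ∂μ :=
          integral_congr_ae (Filter.Eventually.of_forall fun x => by ring)
      _ = ∫ x, (μ[fun x => g₂ x * (f x * g₁ x)|m₂]) x ∂μ := (integral_condExp hm₂).symm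
      _ = ∫ x, g₂ x * A x ∂μ := integral_congr_ae hpull
  -- Step (ii): conditional Cauchy-Schwarz
  have hkey : ∀ q : ℚ, ∀ᵐ x ∂μ, 0 ≤ A x + (-(2 * (q : ℝ))) * B x + (q : ℝ)^2 * g₂ x := by
    intro q
    set c1 : ℝ := -(2 * (q : ℝ)) with hc1
    set c2 : ℝ := (q : ℝ)^2 with hc2
    have i2 : Integrable (fun x => c1 * (f x * h x)) μ := hint_fh.const_mul _
    have i3 : Integrable (fun x => c2 * f x) μ := hfint.const_mul _
    have i23 : Integrable (fun x => c1 * (f x * h x) + c2 * f x) μ := i2.add i3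
    have hcond0 : 0 ≤ᵐ[μ] μ[fun x => f x * h x * h x + (c1 * (f x * h x) + c2 * f x)|m₂] := by
      refine condExp_nonneg (Filter.Eventually.of_forall fun x => ?_)
      have hxe : f x * h x * h x + (c1 * (f x * h x) + c2 * f x) = f x * (h x - q)^2 := by
        rw [hc1, hc2]; ring
      show (0 : ℝ) ≤ f x * h x * h x + (c1 * (f x * h x) + c2 * f x)
      rw [hxe]
      exact mul_nonneg (hfpos x) (sq_nonneg _)
    have ha : μ[fun x => f x * h x * h x + (c1 * (f x * h x) + c2 * f x)|m₂] =ᵐ[μ]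
        μ[fun x => f x * h x * h x|m₂] + μ[fun x => c1 * (f x * h x) + c2 * f x|m₂] :=
      condExp_add hint_fhh i23 m₂
    have hb : μ[fun x => c1 * (f x * h x) + c2 * f x|m₂] =ᵐ[μ]
        μ[fun x => c1 * (f x * h x)|m₂] + μ[fun x => c2 * f x|m₂] :=
      condExp_add i2 i3 m₂
    have hs1 : μ[fun x => c1 * (f x * h x)|m₂] =ᵐ[μ] c1 • B :=
      condExp_smul (μ := μ) (m := m₂) c1 (fun x => f x * h x)
    have hs2 : μ[fun x => c2 * f x|m₂] =ᵐ[μ] c2 • g₂ :=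
      condExp_smul (μ := μ) (m := m₂) c2 f
    have hAhh : μ[fun x => f x * h x * h x|m₂] =ᵐ[μ] A := by
      refine condExp_congr_ae ?_
      filter_upwards [hh2] with x hx
      rw [mul_assoc, hx]
    filter_upwards [hcond0, ha, hb, hs1, hs2, hAhh] with x h0 h1 h2 h3 h4 h5
    simp only [Pi.add_apply, Pi.smul_apply, smul_eq_mul, Pi.zero_apply] at h0 h1 h2 h3 h4
    linarith
  have hCS : ∀ᵐ x ∂μ, B x * B x ≤ g₂ x * A x := by
    have hall : ∀ᵐ x ∂μ, ∀ q : ℚ, 0 ≤ A x + (-(2 * (q : ℝ))) * B x + (q : ℝ)^2 * g₂ x :=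
      ae_all_iff.mpr hkey
    filter_upwards [hall, hg₂0, hA0] with x hx hG0 hA0x
    have hreal : ∀ t : ℝ, 0 ≤ g₂ x * (t * t) + (-(2 * B x)) * t + A x := by
      intro t
      set S : Set ℝ := {s : ℝ | 0 ≤ g₂ x * (s * s) + (-(2 * B x)) * s + A x} with hSdef
      have hScl : IsClosed S :=
        isClosed_le continuous_const
          (((continuous_const.mul (continuous_id.mul continuous_id)).add
            (continuous_const.mul continuous_id)).add continuous_const)
      have hsub : Set.range ((↑) : ℚ → ℝ) ⊆ S := by
        rintro y hy
        obtain ⟨q, rfl⟩ := hy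
        show 0 ≤ g₂ x * ((q : ℝ) * q) + (-(2 * B x)) * q + A x
        nlinarith [hx q]
      have ht : t ∈ closure (Set.range ((↑) : ℚ → ℝ)) := by
        rw [Rat.denseRange_cast.closure_range]
        trivial
      have ht2 := closure_mono hsub ht
      rwa [hScl.closure_eq] at ht2
    have hd := discrim_le_zero hreal
    rw [discrim] at hd
    nlinarith [hd]
  -- Step (iii): compare with ∫ B²
  have hint_BB : Integrable (fun x => B x * B x) μ := int_mul_of_bdd hBaesm hBaesm hBn hBn
  have hint_g₂A : Integrable (fun x => g₂ x * A x) μ := int_mul_of_bdd hg₂aesm hAaesm hg₂n hAn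
  have hstep3 : ∫ x, B x * B x ∂μ ≤ ∫ x, g₂ x * A x ∂μ :=
    integral_mono_ae hint_BB hint_g₂A hCS
  -- Step (iv): (∫B)² ≤ ∫ B²
  have hint_B1 : Integrable (fun x => B x * (1 : ℝ)) μ := by
    simpa using (integrable_condExp : Integrable B μ)
  have hint_11 : Integrable (fun _ : X => (1 : ℝ) * (1 : ℝ)) μ := by
    simpa using (integrable_const (1 : ℝ) : Integrable (fun _ : X => (1:ℝ)) μ)
  have hstep4 : (∫ x, B x ∂μ)^2 ≤ ∫ x, B x * B x ∂μ := by
    have h4 := integral_cs hint_BB hint_11 hint_B1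
    simp only [mul_one] at h4
    rw [integral_const] at h4
    simp only [measure_univ, probReal_univ, ENNReal.toReal_one, one_smul, mul_one] at h4
    exact h4
  -- Step (v): ∫ B = ∫ f h = ∫ h g₁ = ∫ h³
  have hstep5a : ∫ x, B x ∂μ = ∫ x, f x * h x ∂μ := integral_condExp hm₂
  have hint_hf : Integrable (fun x => h x * f x) μ := int_mul_of_bdd hhaesm hfaesm hhn hfn
  have hstep5b : ∫ x, f x * h x ∂μ = ∫ x, h x * g₁ x ∂μ := by
    have hpull : μ[fun x => h x * f x|m₁] =ᵐ[μ] fun x => h x * g₁ x :=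
      condExp_mul_of_stronglyMeasurable_left hhsm hint_hf hfint
    calc ∫ x, f x * h x ∂μ = ∫ x, h x * f x ∂μ :=
          integral_congr_ae (Filter.Eventually.of_forall fun x => by ring)
      _ = ∫ x, (μ[fun x => h x * f x|m₁]) x ∂μ := (integral_condExp hm₁).symm
      _ = ∫ x, h x * g₁ x ∂μ := integral_congr_ae hpull
  have hstep5c : ∫ x, h x * g₁ x ∂μ = ∫ x, h x * h x * h x ∂μ := by
    refine integral_congr_ae ?_
    filter_upwards [hh2] with x hx
    rw [← hx]; ring
  -- Step (vi): (∫ h³)² ≥ (∫ h²)³ and ∫ h² = ∫ f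
  have hs_eq : ∫ x, h x * h x ∂μ = ∫ x, f x ∂μ := by
    rw [integral_congr_ae hh2]
    exact integral_condExp hm₁
  set r : X → ℝ := fun x => Real.sqrt (h x) with hrdef
  have hr2 : ∀ x, r x * r x = h x := fun x => Real.mul_self_sqrt (hh0 x)
  have hraesm : AEStronglyMeasurable r μ :=
    Real.continuous_sqrt.comp_aestronglyMeasurable hhaesm
  have hrn : ∀ᵐ x ∂μ, ‖r x‖ ≤ Real.sqrt D := by
    filter_upwards [hhD] with x hx
    exact norm_bd (Real.sqrt_nonneg _) (Real.sqrt_le_sqrt hx)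
  have hhrn : ∀ᵐ x ∂μ, ‖h x * r x‖ ≤ D * Real.sqrt D := by
    filter_upwards [hhn, hrn] with x h1 h2
    calc ‖h x * r x‖ = ‖h x‖ * ‖r x‖ := norm_mul _ _
      _ ≤ D * Real.sqrt D := mul_le_mul h1 h2 (norm_nonneg _) hD
  have hint_hh : Integrable (fun x => h x * h x) μ := int_mul_of_bdd hhaesm hhaesm hhn hhn
  have hint_hhh : Integrable (fun x => h x * h x * h x) μ :=
    int_mul_of_bdd (hhaesm.mul hhaesm) hhaesm (by
      filter_upwards [hhn] with x hx
      calc ‖h x * h x‖ = ‖h x‖ * ‖h x‖ := norm_mul _ _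
        _ ≤ D * D := mul_le_mul hx hx (norm_nonneg _) hD) hhn
  have hint_h : Integrable h μ := int_of_bdd hhaesm hhn
  -- CS1 : (∫ h²)² ≤ (∫ h³)(∫ h)
  have hCS1 : (∫ x, h x * h x ∂μ)^2 ≤ (∫ x, h x * h x * h x ∂μ) * (∫ x, h x ∂μ) := by
    have huu : Integrable (fun x => (h x * r x) * (h x * r x)) μ := by
      refine (hint_hhh.congr ?_)
      exact Filter.Eventually.of_forall fun x => show h x * h x * h x = (h x * r x) * (h x * r x) by rw [← hr2 x]; ring
    have hvv : Integrable (fun x => r x * r x) μ := by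
      refine (hint_h.congr ?_)
      exact Filter.Eventually.of_forall fun x => (hr2 x).symm
    have huv : Integrable (fun x => (h x * r x) * r x) μ := by
      refine (hint_hh.congr ?_)
      exact Filter.Eventually.of_forall fun x => show h x * h x = (h x * r x) * r x by rw [← hr2 x]; ring
    have h6 := integral_cs huu hvv huv
    have e1 : ∫ x, (h x * r x) * r x ∂μ = ∫ x, h x * h x ∂μ :=
      integral_congr_ae (Filter.Eventually.of_forall fun x =>
        show (h x * r x) * r x = h x * h x by rw [← hr2 x]; ring)
    have e2 : ∫ x, (h x * r x) * (h x * r x) ∂μ = ∫ x, h x * h x * h x ∂μ :=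
      integral_congr_ae (Filter.Eventually.of_forall fun x =>
        show (h x * r x) * (h x * r x) = h x * h x * h x by rw [← hr2 x]; ring)
    have e3 : ∫ x, r x * r x ∂μ = ∫ x, h x ∂μ :=
      integral_congr_ae (Filter.Eventually.of_forall fun x =>
        show r x * r x = h x from hr2 x)
    rw [e1, e2, e3] at h6
    exact h6
  -- CS2 : (∫ h)² ≤ ∫ h²
  have hCS2 : (∫ x, h x ∂μ)^2 ≤ ∫ x, h x * h x ∂μ := by
    have hh1 : Integrable (fun x => h x * (1 : ℝ)) μ := by simpa using hint_h
    have h7 := integral_cs hint_hh hint_11 hh1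
    simp only [mul_one] at h7
    rw [integral_const] at h7
    simp only [measure_univ, probReal_univ, ENNReal.toReal_one, one_smul, mul_one] at h7
    exact h7
  -- final arithmetic
  set s := ∫ x, h x * h x ∂μ with hsdef
  set P := ∫ x, h x * h x * h x ∂μ with hPdef
  set Q := ∫ x, h x ∂μ with hQdef
  have hs0 : 0 ≤ s := integral_nonneg fun x => mul_nonneg (hh0 x) (hh0 x)
  have hP0 : 0 ≤ P := integral_nonneg fun x => mul_nonneg (mul_nonneg (hh0 x) (hh0 x)) (hh0 x)
  have hQ0 : 0 ≤ Q := integral_nonneg hh0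
  have hfinal : s^3 ≤ P^2 := by
    rcases eq_or_lt_of_le hs0 with hs | hs
    · rw [← hs]; simpa using sq_nonneg P
    · have h1 : s^2 * s^2 ≤ (P * Q) * (P * Q) :=
        mul_self_le_mul_self (sq_nonneg s) hCS1
      have h2 : (P * Q) * (P * Q) = P^2 * Q^2 := by ring
      have h3 : P^2 * Q^2 ≤ P^2 * s := mul_le_mul_of_nonneg_left hCS2 (sq_nonneg P)
      have h4 : s^3 * s ≤ P^2 * s := by nlinarith
      exact le_of_mul_le_mul_right h4 hs
  -- put everything together
  calc (∫ x, f x ∂μ)^3 = s^3 := by rw [hs_eq]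
    _ ≤ P^2 := hfinal
    _ = (∫ x, B x ∂μ)^2 := by rw [hstep5a, hstep5b, hstep5c]
    _ ≤ ∫ x, B x * B x ∂μ := hstep4
    _ ≤ ∫ x, g₂ x * A x ∂μ := hstep3
    _ = ∫ x, f x * g₁ x * g₂ x ∂μ := hstep1.symm
    _ = ∫ x, f x * g₁ x * g₂ x ∂μ := rfl
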